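/- Let s ∈ ℝ and let a, b, f, h be unit quaternions with re(b) = 0 and re(h) = 0. Set p = exp(s · im(b*h)) and q = exp(s · im(f*a⁻¹*h)), where exp is the quaternion exponential and im(x) = x − re(x). Then p⁻¹ * a * f⁻¹ * q * f = h * p * q * h⁻¹ * a. (Part of Lemma 2.2 (shuffle) of the paper: the components of the slice map L_s satisfy the relation p̄ a f̄ q f = h p q h̄ a.) -/

import Mathlib

open Quaternion

lemma re_mul_comm' (x y : ℍ[ℝ]) : (x * y).re = (y * x).re := by
  simp only [Quaternion.re_mul]; ring

lemma im_eq_sub (x : ℍ[ℝ]) : Quaternion.im x = x - (x.re : ℍ[ℝ]) :=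
  eq_sub_of_add_eq (by rw [add_comm]; exact Quaternion.re_add_im x)

lemma conj_im (g x : ℍ[ℝ]) (hg : g ≠ 0) :
    g * Quaternion.im x * g⁻¹ = Quaternion.im (g * x * g⁻¹) := by
  have h1 : (g * x * g⁻¹).re = x.re := by
    rw [re_mul_comm', ← mul_assoc, inv_mul_cancel₀ hg, one_mul]
  rw [im_eq_sub, im_eq_sub, h1]
  have h2 : g * ((x.re : ℍ[ℝ])) * g⁻¹ = (x.re : ℍ[ℝ]) := by
    rw [mul_assoc, Quaternion.coe_mul_eq_smul, mul_smul_comm,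
      mul_inv_cancel₀ hg, ← Quaternion.coe_mul_eq_smul, mul_one]
  rw [mul_sub, sub_mul, h2]

lemma conj_exp (g x : ℍ[ℝ]) (hg : g ≠ 0) (s : ℝ) :
    g * NormedSpace.exp (s • Quaternion.im x) * g⁻¹
      = NormedSpace.exp (s • Quaternion.im (g * x * g⁻¹)) := by
  let +nondep : NormedAlgebra ℚ ℍ := .restrictScalars ℚ ℝ ℍ
  rw [← conj_im g x hg, ← smul_mul_assoc, ← mul_smul_comm,
    NormedSpace.exp_conj _ _ hg]

/-- Part of Lemma 2.2 (shuffle): with `p = exp(s·im(b h))` and `q = exp(s·im(f a⁻¹ h))`, where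
`a, b, f, h` are unit quaternions with `re b = 0` and `re h = 0`, the relation
`p̄ a f̄ q f = h p q h̄ a` holds. -/
theorem shuffle_relation (s : ℝ) (a b f h : ℍ[ℝ])
    (ha : ‖a‖ = 1) (hb : ‖b‖ = 1) (hf : ‖f‖ = 1) (hh : ‖h‖ = 1)
    (hbre : b.re = 0) (hhre : h.re = 0)
    (p q : ℍ[ℝ])
    (hp : p = NormedSpace.exp (s • Quaternion.im (b * h)))
    (hq : q = NormedSpace.exp (s • Quaternion.im (f * a⁻¹ * h))) :
    p⁻¹ * a * f⁻¹ * q * f = h * p * q * h⁻¹ * a := by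
  have ha0 : a ≠ 0 := by intro e; rw [e] at ha; simp at ha
  have hf0 : f ≠ 0 := by intro e; rw [e] at hf; simp at hf
  have hh0 : h ≠ 0 := by intro e; rw [e] at hh; simp at hh
  -- im (h*b) = - im (b*h)
  have key : Quaternion.im (h * b) = - Quaternion.im (b * h) := by
    ext <;>
      simp [Quaternion.imI_mul, Quaternion.imJ_mul, Quaternion.imK_mul, hbre, hhre] <;>
      ring
  -- h * p * h⁻¹ = p⁻¹
  have hp' : h * p * h⁻¹ = p⁻¹ := by
    rw [hp, conj_exp _ _ hh0]
    have e1 : h * (b * h) * h⁻¹ = h * b := by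
      rw [mul_assoc h (b * h) h⁻¹, mul_assoc b h h⁻¹, mul_inv_cancel₀ hh0, mul_one]
    let +nondep : NormedAlgebra ℚ ℍ := .restrictScalars ℚ ℝ ℍ
    rw [e1, key, smul_neg, NormedSpace.exp_neg]
  -- h * q * h⁻¹ = exp (s • im (h * f * a⁻¹))
  have hq' : h * q * h⁻¹ = NormedSpace.exp (s • Quaternion.im (h * f * a⁻¹)) := by
    rw [hq, conj_exp _ _ hh0]
    have e2 : h * (f * a⁻¹ * h) * h⁻¹ = h * f * a⁻¹ := by
      rw [mul_assoc h (f * a⁻¹ * h) h⁻¹, mul_assoc (f * a⁻¹) h h⁻¹,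
        mul_inv_cancel₀ hh0, mul_one, ← mul_assoc]
    rw [e2]
  have hq'' : a * (f⁻¹ * q * f) * a⁻¹ = NormedSpace.exp (s • Quaternion.im (h * f * a⁻¹)) := by
    have e3 : f⁻¹ * q * f = NormedSpace.exp (s • Quaternion.im (a⁻¹ * h * f)) := by
      have := conj_exp f⁻¹ (f * a⁻¹ * h) (inv_ne_zero hf0) s
      rw [inv_inv] at this
      rw [hq, this]
      congr 2
      rw [← mul_assoc, ← mul_assoc, inv_mul_cancel₀ hf0, one_mul]
    rw [e3, conj_exp _ _ ha0]
    have e4 : a * (a⁻¹ * h * f) * a⁻¹ = h * f * a⁻¹ := by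
      rw [← mul_assoc, ← mul_assoc, mul_inv_cancel₀ ha0, one_mul]
    rw [e4]
  -- assemble
  have L : p⁻¹ * a * f⁻¹ * q * f = p⁻¹ * (a * (f⁻¹ * q * f) * a⁻¹) * a := by
    simp [mul_assoc, inv_mul_cancel₀ ha0]
  have hc : h⁻¹ * (h * q * h⁻¹) = q * h⁻¹ := by
    rw [← mul_assoc, ← mul_assoc, inv_mul_cancel₀ hh0, one_mul]
  have R : h * p * q * h⁻¹ * a = (h * p * h⁻¹) * (h * q * h⁻¹) * a := by
    rw [mul_assoc (h * p) h⁻¹ (h * q * h⁻¹), hc, ← mul_assoc]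
  rw [L, R, hp', hq', hq'']
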